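/- Let H be a real Hilbert space, A : H → H a continuous self-adjoint nonnegative linear operator, 0 ≤ p ≤ 1, γ ≥ 1, and u₀ ∈ H with ⟨Au₀,u₀⟩ > 0. Let u : [0,∞) → H be a C¹ solution of u'(t) + (1+t)^{p} ⟨Au(t),u(t)⟩^γ A u(t) = 0 with u(0) = u₀, and assume ⟨Au(t),u(t)⟩ > 0 and |Au(t)| > 0 for all t ≥ 0. Then the ratios |Au(t)|²/⟨Au(t),u(t)⟩ and ⟨A²u(t), Au(t)⟩/|Au(t)|² are nonincreasing in t; in particular |Au(t)|²/⟨Au(t),u(t)⟩ ≤ |Au₀|²/⟨Au₀,u₀⟩ and ⟨A²u(t),Au(t)⟩/|Au(t)|² ≤ ⟨A²u₀,Au₀⟩/|Au₀|² for all t ≥ 0. -/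

import Mathlib

open Real
open scoped RealInnerProductSpace

/-- `u` (with derivative `u'`) is a global C¹ solution on `[0,∞)` of the parabolic
Cauchy problem `u' + (1+t)^{p} ⟨Au,u⟩^γ A u = 0`, `u(0) = u₀`. -/
def IsParSolution {H : Type*} [NormedAddCommGroup H] [InnerProductSpace ℝ H]
    (A : H →L[ℝ] H) (p γ : ℝ) (u₀ : H) (u u' : ℝ → H) : Prop :=
  u 0 = u₀ ∧
  (∀ t ∈ Set.Ici (0:ℝ), HasDerivWithinAt u (u' t) (Set.Ici 0) t) ∧
  ContinuousOn u' (Set.Ici 0) ∧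
  (∀ t ∈ Set.Ici (0:ℝ),
    u' t + ((1+t) ^ p * ⟪A (u t), u t⟫ ^ γ) • A (u t) = 0)

lemma semidef_cauchy_schwarz {H : Type*} [NormedAddCommGroup H] [InnerProductSpace ℝ H]
    (A : H →L[ℝ] H)
    (hA_sa : ∀ x y : H, ⟪A x, y⟫ = ⟪x, A y⟫)
    (hA_nn : ∀ x : H, 0 ≤ ⟪A x, x⟫) (x y : H) :
    ⟪A x, y⟫ ^ 2 ≤ ⟪A x, x⟫ * ⟪A y, y⟫ := by
  have key : ∀ t : ℝ, 0 ≤ ⟪A y, y⟫ * (t * t) + (2 * ⟪A x, y⟫) * t + ⟪A x, x⟫ := by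
    intro t
    have h := hA_nn (x + t • y)
    have hyx : ⟪A y, x⟫ = ⟪A x, y⟫ := by rw [hA_sa y x, real_inner_comm]
    simp only [map_add, map_smul, inner_add_left, inner_add_right, real_inner_smul_left,
      real_inner_smul_right, hyx] at h
    nlinarith [h]
  have hd := discrim_le_zero key
  rw [discrim] at hd
  nlinarith [hd]

lemma quotient_antitone_aux {F G F' G' : ℝ → ℝ}
    (hF : ∀ t ∈ Set.Ici (0:ℝ), HasDerivWithinAt F (F' t) (Set.Ici 0) t)
    (hG : ∀ t ∈ Set.Ici (0:ℝ), HasDerivWithinAt G (G' t) (Set.Ici 0) t)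
    (hGpos : ∀ t ∈ Set.Ici (0:ℝ), 0 < G t)
    (hnum : ∀ t ∈ Set.Ici (0:ℝ), F' t * G t - F t * G' t ≤ 0) :
    AntitoneOn (fun t => F t / G t) (Set.Ici (0:ℝ)) := by
  apply antitoneOn_of_hasDerivWithinAt_nonpos (convex_Ici 0)
    (f' := fun t => (F' t * G t - F t * G' t) / G t ^ 2)
  · intro t ht
    exact ((hF t ht).div (hG t ht) (hGpos t ht).ne').continuousWithinAt
  · intro t ht
    rw [interior_Ici] at ht
    exact (((hF t (Set.mem_Ici.mpr (le_of_lt ht))).div (hG t (Set.mem_Ici.mpr (le_of_lt ht)))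
      (hGpos t (Set.mem_Ici.mpr (le_of_lt ht))).ne').mono (Set.Ioi_subset_Ici le_rfl)).mono
      (by rw [interior_Ici])
  · intro t ht
    rw [interior_Ici] at ht
    exact div_nonpos_of_nonpos_of_nonneg (hnum t (Set.mem_Ici.mpr (le_of_lt ht))) (sq_nonneg _)

/-- Estimate (3.1): along solutions of the parabolic problem, the ratios
`|Au|²/⟨Au,u⟩` and `⟨A²u,Au⟩/|Au|²` are nonincreasing in time; in particular
they are bounded by their values at `t = 0`. -/
theorem parabolic_ratio_monotone
    {H : Type*} [NormedAddCommGroup H] [InnerProductSpace ℝ H]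
    (A : H →L[ℝ] H)
    (hA_sa : ∀ x y : H, ⟪A x, y⟫ = ⟪x, A y⟫)
    (hA_nn : ∀ x : H, 0 ≤ ⟪A x, x⟫)
    (p γ : ℝ) (hp0 : 0 ≤ p) (hp1 : p ≤ 1) (hγ : 1 ≤ γ)
    (u₀ : H) (hmdg : 0 < ⟪A u₀, u₀⟫)
    (u u' : ℝ → H) (hu : IsParSolution A p γ u₀ u u')
    (hpos1 : ∀ t ∈ Set.Ici (0:ℝ), 0 < ⟪A (u t), u t⟫)
    (hpos2 : ∀ t ∈ Set.Ici (0:ℝ), 0 < ‖A (u t)‖) :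
    AntitoneOn (fun t => ‖A (u t)‖ ^ 2 / ⟪A (u t), u t⟫) (Set.Ici (0:ℝ)) ∧
    AntitoneOn (fun t => ⟪A (A (u t)), A (u t)⟫ / ‖A (u t)‖ ^ 2) (Set.Ici (0:ℝ)) ∧
    (∀ t ∈ Set.Ici (0:ℝ),
      ‖A (u t)‖ ^ 2 / ⟪A (u t), u t⟫ ≤ ‖A u₀‖ ^ 2 / ⟪A u₀, u₀⟫ ∧
      ⟪A (A (u t)), A (u t)⟫ / ‖A (u t)‖ ^ 2 ≤ ⟪A (A u₀), A u₀⟫ / ‖A u₀‖ ^ 2) := by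
  obtain ⟨hu0, hder, hu'cont, hODE⟩ := hu
  set c : ℝ → ℝ := fun t => (1 + t) ^ p * ⟪A (u t), u t⟫ ^ γ with hc
  have hcpos : ∀ t ∈ Set.Ici (0:ℝ), 0 < c t := by
    intro t ht
    exact mul_pos (rpow_pos_of_pos (by simp only [Set.mem_Ici] at ht; linarith) p)
      (rpow_pos_of_pos (hpos1 t ht) γ)
  have hu' : ∀ t ∈ Set.Ici (0:ℝ), u' t = -(c t) • A (u t) := by
    intro t ht
    have h := hODE t ht
    rw [add_eq_zero_iff_eq_neg] at h
    rw [h, neg_smul]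
  set F : ℝ → ℝ := fun t => ⟪A (u t), A (u t)⟫ with hFdef
  set G : ℝ → ℝ := fun t => ⟪A (u t), u t⟫ with hGdef
  set K : ℝ → ℝ := fun t => ⟪A (A (u t)), A (u t)⟫ with hKdef
  set L : ℝ → ℝ := fun t => ⟪A (A (u t)), A (A (u t))⟫ with hLdef
  have hFpos : ∀ t ∈ Set.Ici (0:ℝ), 0 < F t := by
    intro t ht
    have h2 := hpos2 t ht
    simp only [hFdef, real_inner_self_eq_norm_sq]
    positivity
  have hAu : ∀ t ∈ Set.Ici (0:ℝ),
      HasDerivWithinAt (fun s => A (u s)) (A (u' t)) (Set.Ici 0) t := fun t ht =>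
    A.hasFDerivAt.comp_hasDerivWithinAt t (hder t ht)
  have hAAu : ∀ t ∈ Set.Ici (0:ℝ),
      HasDerivWithinAt (fun s => A (A (u s))) (A (A (u' t))) (Set.Ici 0) t := fun t ht =>
    A.hasFDerivAt.comp_hasDerivWithinAt t (hAu t ht)
  have hG : ∀ t ∈ Set.Ici (0:ℝ),
      HasDerivWithinAt G (-(2 * c t) * F t) (Set.Ici 0) t := by
    intro t ht
    have h := (hAu t ht).inner ℝ (hder t ht)
    convert h using 1
    case e'_4 => rfl
    case e'_5 => rfl
    rw [hu' t ht]
    simp only [map_neg, map_smul, inner_smul_right, inner_neg_right, inner_neg_left,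
      real_inner_smul_left, ContinuousLinearMap.map_smul]
    have he : ⟪A (A (u t)), u t⟫ = ⟪A (u t), A (u t)⟫ := by rw [hA_sa (A (u t)) (u t)]
    simp only [hFdef]
    rw [he]
    ring
  have hF : ∀ t ∈ Set.Ici (0:ℝ),
      HasDerivWithinAt F (-(2 * c t) * K t) (Set.Ici 0) t := by
    intro t ht
    have h := (hAu t ht).inner ℝ (hAu t ht)
    convert h using 1
    case e'_4 => rfl
    case e'_5 => rfl
    rw [hu' t ht]
    simp only [map_neg, map_smul, inner_smul_right, inner_neg_right, inner_neg_left,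
      real_inner_smul_left, ContinuousLinearMap.map_smul]
    have he : ⟪A (u t), A (A (u t))⟫ = ⟪A (A (u t)), A (u t)⟫ := real_inner_comm _ _
    simp only [hKdef]
    rw [he]
    ring
  have hK : ∀ t ∈ Set.Ici (0:ℝ),
      HasDerivWithinAt K (-(2 * c t) * L t) (Set.Ici 0) t := by
    intro t ht
    have h := (hAAu t ht).inner ℝ (hAu t ht)
    convert h using 1
    case e'_4 => rfl
    case e'_5 => rfl
    rw [hu' t ht]
    simp only [map_neg, map_smul, inner_smul_right, inner_neg_right, inner_neg_left,
      real_inner_smul_left, ContinuousLinearMap.map_smul]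
    have he : ⟪A (A (A (u t))), A (u t)⟫ = ⟪A (A (u t)), A (A (u t))⟫ := by
      rw [hA_sa (A (A (u t))) (A (u t))]
    simp only [hLdef]
    rw [he]
    ring
  -- antitonicity of the first ratio
  have hant1 : AntitoneOn (fun t => F t / G t) (Set.Ici (0:ℝ)) := by
    apply quotient_antitone_aux hF hG hpos1
    intro t ht
    have hcs : F t ^ 2 ≤ G t * K t := by
      have := semidef_cauchy_schwarz A hA_sa hA_nn (u t) (A (u t))
      simpa only [hFdef, hGdef, hKdef] using this
    have hct := (hcpos t ht).le
    nlinarith [hcs, hct]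
  have hant2 : AntitoneOn (fun t => K t / F t) (Set.Ici (0:ℝ)) := by
    apply quotient_antitone_aux hK hF hFpos
    intro t ht
    have hcs : K t ^ 2 ≤ L t * F t := by
      have h := real_inner_mul_inner_self_le (A (A (u t))) (A (u t))
      simp only [hKdef, hLdef, hFdef]
      nlinarith [h]
    have hct := (hcpos t ht).le
    nlinarith [hcs, hct]
  have heq1 : (fun t => ‖A (u t)‖ ^ 2 / ⟪A (u t), u t⟫) = fun t => F t / G t := by
    funext t; simp only [hFdef, hGdef, real_inner_self_eq_norm_sq]
  have heq2 : (fun t => ⟪A (A (u t)), A (u t)⟫ / ‖A (u t)‖ ^ 2) = fun t => K t / F t := by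
    funext t; simp only [hKdef, hFdef, real_inner_self_eq_norm_sq]
  rw [heq1, heq2]
  refine ⟨hant1, hant2, ?_⟩
  intro t ht
  have h0 : (0:ℝ) ∈ Set.Ici (0:ℝ) := Set.self_mem_Ici
  have ht' : (0:ℝ) ≤ t := ht
  constructor
  · have := hant1 h0 ht ht'
    simpa [hFdef, hGdef, hu0, real_inner_self_eq_norm_sq] using this
  · have := hant2 h0 ht ht'
    simpa [hKdef, hFdef, hu0, real_inner_self_eq_norm_sq] using this
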